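/- arXiv:2302.00975 — 3 statements merged into one kernel-verified Lean document; each statement's English description precedes it below -/
import Mathlib

section
/- For probability measures G, H on ℝ² with finite second moments, the covariance functional S(G) = ∫ y1 y2 dG - (∫ y1 dG)(∫ y2 dG) satisfies the local Lipschitz bound |S(G) - S(H)| ≤ (M2(G) + M2(H)) · W2(G, H), where M2 is the second moment norm and W2 is the Wasserstein distance of order 2. -/
open MeasureTheory
open scoped ENNReal NNReal

/-- The Wasserstein distance of order 2 on ℝ² (with the Euclidean norm). -/
noncomputable def W2 (μ ν : MeasureTheory.Measure (EuclideanSpace ℝ (Fin 2))) : ℝ≥0∞ :=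
  ⨅ (π : MeasureTheory.Measure (EuclideanSpace ℝ (Fin 2) × EuclideanSpace ℝ (Fin 2)))
    (_ : π.map Prod.fst = μ ∧ π.map Prod.snd = ν),
    (∫⁻ x, (‖x.1 - x.2‖₊ : ℝ≥0∞) ^ (2 : ℝ) ∂π) ^ ((1 : ℝ) / 2)

/-- Second moment norm `M₂(μ) = (∫ ‖y‖² dμ)^{1/2}`. -/
noncomputable def M2 (μ : MeasureTheory.Measure (EuclideanSpace ℝ (Fin 2))) : ℝ :=
  (∫ y, ‖y‖ ^ 2 ∂μ) ^ ((1 : ℝ) / 2)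

/-- Covariance functional `S(G) = ∫ y₁y₂ dG - (∫ y₁ dG)(∫ y₂ dG)`. -/
noncomputable def covFun (G : MeasureTheory.Measure (EuclideanSpace ℝ (Fin 2))) : ℝ :=
  (∫ y, y 0 * y 1 ∂G) - (∫ y, y 0 ∂G) * (∫ y, y 1 ∂G)

section Aux

variable {α : Type*} [MeasurableSpace α] {μ : MeasureTheory.Measure α}

lemma my_integrable_mul {A B : α → ℝ} (hA : MemLp A 2 μ) (hB : MemLp B 2 μ) :
    Integrable (fun x => A x * B x) μ := by
  have h : MemLp (fun x => A x • B x) 1 μ := hB.smul hA (hpqr := ⟨by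
    rw [inv_one]
    exact ENNReal.inv_two_add_inv_two⟩)
  simpa [smul_eq_mul] using memLp_one_iff_integrable.1 h

/-- Cauchy–Schwarz for integrals of real functions. -/
lemma my_abs_integral_mul_le {A B : α → ℝ} (hA : MemLp A 2 μ) (hB : MemLp B 2 μ) :
    |∫ x, A x * B x ∂μ| ≤ Real.sqrt (∫ x, A x ^ 2 ∂μ) * Real.sqrt (∫ x, B x ^ 2 ∂μ) := by
  set F := hA.toLp A with hF
  set G := hB.toLp B with hGdef
  have hFA := hA.coeFn_toLp
  have hGB := hB.coeFn_toLp
  have hinner : (inner ℝ F G : ℝ) = ∫ x, A x * B x ∂μ := by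
    rw [MeasureTheory.L2.inner_def]
    refine integral_congr_ae ?_
    filter_upwards [hFA, hGB] with x h1 h2
    simp [hF, hGdef, h1, h2, RCLike.inner_apply, mul_comm]
  have hnF : ‖F‖ = Real.sqrt (∫ x, A x ^ 2 ∂μ) := by
    have h1 : (inner ℝ F F : ℝ) = ∫ x, A x ^ 2 ∂μ := by
      rw [MeasureTheory.L2.inner_def]
      refine integral_congr_ae ?_
      filter_upwards [hFA] with x h1
      simp [hF, h1, RCLike.inner_apply, sq]
    rw [← h1, real_inner_self_eq_norm_sq, Real.sqrt_sq (norm_nonneg _)]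
  have hnG : ‖G‖ = Real.sqrt (∫ x, B x ^ 2 ∂μ) := by
    have h1 : (inner ℝ G G : ℝ) = ∫ x, B x ^ 2 ∂μ := by
      rw [MeasureTheory.L2.inner_def]
      refine integral_congr_ae ?_
      filter_upwards [hGB] with x h1
      simp [hGdef, h1, RCLike.inner_apply, sq]
    rw [← h1, real_inner_self_eq_norm_sq, Real.sqrt_sq (norm_nonneg _)]
  calc |∫ x, A x * B x ∂μ| = |(inner ℝ F G : ℝ)| := by rw [hinner]
    _ ≤ ‖F‖ * ‖G‖ := abs_real_inner_le_norm F G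
    _ = _ := by rw [hnF, hnG]

/-- Covariance Cauchy–Schwarz bound. -/
lemma my_abs_cov_le [IsProbabilityMeasure μ] {A B : α → ℝ}
    (hA : MemLp A 2 μ) (hB : MemLp B 2 μ) :
    |(∫ x, A x * B x ∂μ) - (∫ x, A x ∂μ) * (∫ x, B x ∂μ)|
      ≤ Real.sqrt (∫ x, A x ^ 2 ∂μ) * Real.sqrt (∫ x, B x ^ 2 ∂μ) := by
  set a := ∫ x, A x ∂μ with ha
  have hA' : MemLp (fun x => A x - a) 2 μ := hA.sub (memLp_const a)
  have hintA : Integrable A μ := hA.integrable one_le_two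
  have hintB : Integrable B μ := hB.integrable one_le_two
  have hAB : Integrable (fun x => A x * B x) μ := my_integrable_mul hA hB
  have key1 : ∫ x, (A x - a) * B x ∂μ
      = (∫ x, A x * B x ∂μ) - a * ∫ x, B x ∂μ := by
    have : ∀ x, (A x - a) * B x = A x * B x - a * B x := fun x => by ring
    simp_rw [this]
    rw [integral_sub hAB (hintB.const_mul a), integral_const_mul]
  have hsqA : Integrable (fun x => A x ^ 2) μ := hA.integrable_sq
  have key2 : ∫ x, (A x - a) ^ 2 ∂μ = (∫ x, A x ^ 2 ∂μ) - a ^ 2 := by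
    have e : ∀ x, (A x - a) ^ 2 = A x ^ 2 - a * (2 * A x) + a ^ 2 := fun x => by ring
    simp_rw [e]
    have i2 : Integrable (fun x => a * (2 * A x)) μ := (hintA.const_mul 2).const_mul a
    have i1 : Integrable (fun x => A x ^ 2 - a * (2 * A x)) μ := hsqA.sub i2
    rw [integral_add i1 (integrable_const _),
      integral_sub hsqA i2, integral_const_mul,
      integral_const_mul, integral_const]
    simp [← ha]
    ring
  have key3 : ∫ x, (A x - a) ^ 2 ∂μ ≤ ∫ x, A x ^ 2 ∂μ := by
    rw [key2]; nlinarith [sq_nonneg a]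
  calc |(∫ x, A x * B x ∂μ) - a * ∫ x, B x ∂μ|
      = |∫ x, (A x - a) * B x ∂μ| := by rw [key1]
    _ ≤ Real.sqrt (∫ x, (A x - a) ^ 2 ∂μ) * Real.sqrt (∫ x, B x ^ 2 ∂μ) :=
        my_abs_integral_mul_le hA' hB
    _ ≤ Real.sqrt (∫ x, A x ^ 2 ∂μ) * Real.sqrt (∫ x, B x ^ 2 ∂μ) := by
        exact mul_le_mul_of_nonneg_right (Real.sqrt_le_sqrt key3) (Real.sqrt_nonneg _)

end Aux

section Euclid

local notation "E" => EuclideanSpace ℝ (Fin 2)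

lemma coord_continuous (i : Fin 2) : Continuous (fun y : E => y i) :=
  (EuclideanSpace.proj (𝕜 := ℝ) (ι := Fin 2) i).continuous

lemma coord_memℒp {μ : Measure E} (h : MemLp id 2 μ) (i : Fin 2) :
    MemLp (fun y : E => y i) 2 μ := by
  have := (EuclideanSpace.proj (𝕜 := ℝ) (ι := Fin 2) i).comp_memLp' h
  simpa [Function.comp] using this

lemma coord_sq_le (y : E) (i : Fin 2) : y i ^ 2 ≤ ‖y‖ ^ 2 := by
  have h : ‖y‖ ^ 2 = ∑ j, y j ^ 2 := by
    rw [EuclideanSpace.norm_eq, Real.sq_sqrt (Finset.sum_nonneg fun j _ => sq_nonneg _)]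
    simp [sq_abs]
  rw [h]
  exact Finset.single_le_sum (f := fun j => y j ^ 2) (fun j _ => sq_nonneg _) (Finset.mem_univ i)

lemma norm_sq_integrable {μ : Measure E} (h : MemLp id 2 μ) :
    Integrable (fun y : E => ‖y‖ ^ 2) μ := by
  simpa [Function.id_def] using h.norm.integrable_sq

lemma M2_nonneg (μ : Measure E) : 0 ≤ M2 μ :=
  Real.rpow_nonneg (integral_nonneg fun _ => sq_nonneg _) _

lemma covFun_eq_zero_of_M2_eq_zero {μ : Measure E} [IsProbabilityMeasure μ]
    (hμ : MemLp id 2 μ) (h : M2 μ = 0) : covFun μ = 0 := by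
  have hnn : 0 ≤ ∫ y, ‖y‖ ^ 2 ∂μ := integral_nonneg fun y => sq_nonneg _
  have hI : ∫ y, ‖y‖ ^ 2 ∂μ = 0 := by
    by_contra h'
    have hpos : 0 < ∫ y, ‖y‖ ^ 2 ∂μ := lt_of_le_of_ne hnn (Ne.symm h')
    have := Real.rpow_pos_of_pos hpos ((1 : ℝ) / 2)
    rw [M2] at h
    linarith
  have hae : ∀ᵐ y ∂μ, y = (0 : E) := by
    have h0 := (integral_eq_zero_iff_of_nonneg (fun y => sq_nonneg ‖y‖)
      (norm_sq_integrable hμ)).1 hI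
    filter_upwards [h0] with y hy
    have : ‖y‖ ^ 2 = 0 := hy
    have : ‖y‖ = 0 := by nlinarith [norm_nonneg y, sq_nonneg ‖y‖]
    exact norm_eq_zero.1 this
  have h01 : ∫ y, y 0 * y 1 ∂μ = 0 := by
    rw [integral_congr_ae (g := fun _ => (0 : ℝ)) ?_, integral_zero]
    filter_upwards [hae] with y hy
    simp [hy]
  have h0' : ∫ y, y 0 ∂μ = 0 := by
    rw [integral_congr_ae (g := fun _ => (0 : ℝ)) ?_, integral_zero]
    filter_upwards [hae] with y hy
    simp [hy]
  rw [covFun, h01, h0']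
  ring

end Euclid

section Main

local notation "E" => EuclideanSpace ℝ (Fin 2)

/-- Local Lipschitz bound for the covariance functional in Wasserstein-2 distance:
`|S(G) - S(H)| ≤ (M₂(G) + M₂(H)) · W₂(G,H)`. -/
theorem covariance_local_lipschitz_W2
    (G H : MeasureTheory.Measure (EuclideanSpace ℝ (Fin 2)))
    [IsProbabilityMeasure G] [IsProbabilityMeasure H]
    (hG : MeasureTheory.MemLp id 2 G) (hH : MeasureTheory.MemLp id 2 H) :
    ENNReal.ofReal |covFun G - covFun H|
      ≤ ENNReal.ofReal (M2 G + M2 H) * W2 G H := by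
  by_cases hdeg : M2 G + M2 H ≤ 0
  · have hG0 : M2 G = 0 := le_antisymm (by linarith [M2_nonneg H]) (M2_nonneg G)
    have hH0 : M2 H = 0 := le_antisymm (by linarith [M2_nonneg G]) (M2_nonneg H)
    rw [covFun_eq_zero_of_M2_eq_zero hG hG0, covFun_eq_zero_of_M2_eq_zero hH hH0]
    simp
  · push_neg at hdeg
    set c := ENNReal.ofReal (M2 G + M2 H) with hc
    have hc0 : c ≠ 0 := by
      simp only [hc, ne_eq, ENNReal.ofReal_eq_zero, not_le]
      linarith
    have hcT : c ≠ ⊤ := ENNReal.ofReal_ne_top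
    rw [mul_comm, ← ENNReal.div_le_iff_le_mul (Or.inl hc0) (Or.inl hcT), W2]
    refine le_iInf fun π => le_iInf fun hπ => ?_
    rw [ENNReal.div_le_iff_le_mul (Or.inl hc0) (Or.inl hcT)]
    obtain ⟨h1, h2⟩ := hπ
    haveI : IsProbabilityMeasure π := by
      constructor
      have huniv := measure_univ (μ := G)
      rw [← h1, Measure.map_apply measurable_fst MeasurableSet.univ] at huniv
      simpa using huniv
    set L := ∫⁻ x : E × E, (‖x.1 - x.2‖₊ : ℝ≥0∞) ^ (2 : ℝ) ∂π with hLdef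
    by_cases hLtop : L = ⊤
    · rw [hLtop, ENNReal.top_rpow_of_pos (by norm_num), ENNReal.top_mul hc0]
      exact le_top
    -- MemLp facts for the four coordinate maps
    have hA1 : MemLp (fun p : E × E => p.1 0) 2 π := by
      have h := coord_memℒp hG 0
      rw [← h1] at h
      have := (memLp_map_measure_iff (coord_continuous 0).aestronglyMeasurable
        measurable_fst.aemeasurable).1 h
      exact this
    have hA2 : MemLp (fun p : E × E => p.1 1) 2 π := by
      have h := coord_memℒp hG 1
      rw [← h1] at h
      have := (memLp_map_measure_iff (coord_continuous 1).aestronglyMeasurable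
        measurable_fst.aemeasurable).1 h
      exact this
    have hB1 : MemLp (fun p : E × E => p.2 0) 2 π := by
      have h := coord_memℒp hH 0
      rw [← h2] at h
      have := (memLp_map_measure_iff (coord_continuous 0).aestronglyMeasurable
        measurable_snd.aemeasurable).1 h
      exact this
    have hB2 : MemLp (fun p : E × E => p.2 1) 2 π := by
      have h := coord_memℒp hH 1
      rw [← h2] at h
      have := (memLp_map_measure_iff (coord_continuous 1).aestronglyMeasurable
        measurable_snd.aemeasurable).1 h
      exact this
    -- covFun in terms of π
    have hcovG : covFun G = (∫ p : E × E, p.1 0 * p.1 1 ∂π)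
        - (∫ p : E × E, p.1 0 ∂π) * (∫ p : E × E, p.1 1 ∂π) := by
      rw [covFun, ← h1,
        integral_map measurable_fst.aemeasurable (f := fun y : E => y 0 * y 1)
          ((coord_continuous 0).mul (coord_continuous 1)).aestronglyMeasurable,
        integral_map measurable_fst.aemeasurable (coord_continuous 0).aestronglyMeasurable,
        integral_map measurable_fst.aemeasurable (coord_continuous 1).aestronglyMeasurable]
    have hcovH : covFun H = (∫ p : E × E, p.2 0 * p.2 1 ∂π)
        - (∫ p : E × E, p.2 0 ∂π) * (∫ p : E × E, p.2 1 ∂π) := by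
      rw [covFun, ← h2,
        integral_map measurable_snd.aemeasurable (f := fun y : E => y 0 * y 1)
          ((coord_continuous 0).mul (coord_continuous 1)).aestronglyMeasurable,
        integral_map measurable_snd.aemeasurable (coord_continuous 0).aestronglyMeasurable,
        integral_map measurable_snd.aemeasurable (coord_continuous 1).aestronglyMeasurable]
    -- the two covariance bounds
    have hcov1 := my_abs_cov_le hA1 (hA2.sub hB2)
    have hcov2 := my_abs_cov_le (hA1.sub hB1) hB2
    simp only [Pi.sub_apply] at hcov1 hcov2
    -- linearity rewrites
    have l1 : ∫ p : E × E, p.1 0 * (p.1 1 - p.2 1) ∂π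
        = (∫ p : E × E, p.1 0 * p.1 1 ∂π) - ∫ p : E × E, p.1 0 * p.2 1 ∂π := by
      have e : ∀ p : E × E, p.1 0 * (p.1 1 - p.2 1) = p.1 0 * p.1 1 - p.1 0 * p.2 1 :=
        fun p => by ring
      simp_rw [e]
      exact integral_sub (my_integrable_mul hA1 hA2) (my_integrable_mul hA1 hB2)
    have l2 : ∫ p : E × E, (p.1 1 - p.2 1) ∂π
        = (∫ p : E × E, p.1 1 ∂π) - ∫ p : E × E, p.2 1 ∂π :=
      integral_sub (hA2.integrable one_le_two) (hB2.integrable one_le_two)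
    have l3 : ∫ p : E × E, (p.1 0 - p.2 0) * p.2 1 ∂π
        = (∫ p : E × E, p.1 0 * p.2 1 ∂π) - ∫ p : E × E, p.2 0 * p.2 1 ∂π := by
      have e : ∀ p : E × E, (p.1 0 - p.2 0) * p.2 1 = p.1 0 * p.2 1 - p.2 0 * p.2 1 :=
        fun p => by ring
      simp_rw [e]
      exact integral_sub (my_integrable_mul hA1 hB2) (my_integrable_mul hB1 hB2)
    have l4 : ∫ p : E × E, (p.1 0 - p.2 0) ∂π
        = (∫ p : E × E, p.1 0 ∂π) - ∫ p : E × E, p.2 0 ∂π :=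
      integral_sub (hA1.integrable one_le_two) (hB1.integrable one_le_two)
    rw [l1, l2] at hcov1
    rw [l3, l4] at hcov2
    -- second moment bounds
    have sqrtC_def : True := trivial
    have b1 : Real.sqrt (∫ p : E × E, (p.1 0) ^ 2 ∂π) ≤ M2 G := by
      have e1 : ∫ p : E × E, (p.1 0) ^ 2 ∂π = ∫ y, (y 0) ^ 2 ∂G := by
        rw [← h1, integral_map measurable_fst.aemeasurable (f := fun y : E => y 0 ^ 2)
          ((coord_continuous 0).pow 2).aestronglyMeasurable]
      have e2 : ∫ y, (y 0 : ℝ) ^ 2 ∂G ≤ ∫ y, ‖y‖ ^ 2 ∂G :=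
        integral_mono (coord_memℒp hG 0).integrable_sq (norm_sq_integrable hG)
          fun y => coord_sq_le y 0
      rw [e1]
      calc Real.sqrt (∫ y, (y 0 : ℝ) ^ 2 ∂G) ≤ Real.sqrt (∫ y, ‖y‖ ^ 2 ∂G) :=
            Real.sqrt_le_sqrt e2
        _ = M2 G := by rw [M2, Real.sqrt_eq_rpow]
    have b4 : Real.sqrt (∫ p : E × E, (p.2 1) ^ 2 ∂π) ≤ M2 H := by
      have e1 : ∫ p : E × E, (p.2 1) ^ 2 ∂π = ∫ y, (y 1) ^ 2 ∂H := by
        rw [← h2, integral_map measurable_snd.aemeasurable (f := fun y : E => y 1 ^ 2)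
          ((coord_continuous 1).pow 2).aestronglyMeasurable]
      have e2 : ∫ y, (y 1 : ℝ) ^ 2 ∂H ≤ ∫ y, ‖y‖ ^ 2 ∂H :=
        integral_mono (coord_memℒp hH 1).integrable_sq (norm_sq_integrable hH)
          fun y => coord_sq_le y 1
      rw [e1]
      calc Real.sqrt (∫ y, (y 1 : ℝ) ^ 2 ∂H) ≤ Real.sqrt (∫ y, ‖y‖ ^ 2 ∂H) :=
            Real.sqrt_le_sqrt e2
        _ = M2 H := by rw [M2, Real.sqrt_eq_rpow]
    -- the displacement function
    have hDcont : Continuous (fun p : E × E => p.1 - p.2) := continuous_fst.sub continuous_snd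
    have hD : MemLp (fun p : E × E => p.1 - p.2) 2 π := by
      refine ⟨hDcont.aestronglyMeasurable, ?_⟩
      rw [eLpNorm_eq_lintegral_rpow_enorm_toReal (by norm_num) (by norm_num)]
      have : (2 : ℝ≥0∞).toReal = (2 : ℝ) := by norm_num
      rw [this]
      exact ENNReal.rpow_lt_top_of_nonneg (by norm_num) hLtop
    have hDsq : Integrable (fun p : E × E => ‖p.1 - p.2‖ ^ 2) π := by
      simpa using hD.norm.integrable_sq
    have hDint : ∫ p : E × E, ‖p.1 - p.2‖ ^ 2 ∂π = L.toReal := by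
      rw [integral_eq_lintegral_of_nonneg_ae (ae_of_all _ fun p => sq_nonneg _)
        (hDcont.norm.pow 2).aestronglyMeasurable]
      congr 1
      refine lintegral_congr fun p => ?_
      rw [ENNReal.ofReal_pow (norm_nonneg _), ofReal_norm, enorm_eq_nnnorm,
        ← ENNReal.rpow_natCast]
      norm_num
    have b2 : Real.sqrt (∫ p : E × E, (p.1 1 - p.2 1) ^ 2 ∂π) ≤ Real.sqrt L.toReal := by
      refine Real.sqrt_le_sqrt ?_
      rw [← hDint]
      refine integral_mono ?_ hDsq fun p => ?_
      · have := (hA2.sub hB2).integrable_sq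
        simpa [Pi.sub_apply] using this
      · have h := coord_sq_le (p.1 - p.2) 1
        rwa [PiLp.sub_apply] at h
    have b3 : Real.sqrt (∫ p : E × E, (p.1 0 - p.2 0) ^ 2 ∂π) ≤ Real.sqrt L.toReal := by
      refine Real.sqrt_le_sqrt ?_
      rw [← hDint]
      refine integral_mono ?_ hDsq fun p => ?_
      · have := (hA1.sub hB1).integrable_sq
        simpa [Pi.sub_apply] using this
      · have h := coord_sq_le (p.1 - p.2) 0
        rwa [PiLp.sub_apply] at h
    -- combine
    have habs : |covFun G - covFun H| ≤ (M2 G + M2 H) * Real.sqrt L.toReal := by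
      rw [hcovG, hcovH]
      have hdecomp : ((∫ p : E × E, p.1 0 * p.1 1 ∂π)
            - (∫ p : E × E, p.1 0 ∂π) * (∫ p : E × E, p.1 1 ∂π))
          - ((∫ p : E × E, p.2 0 * p.2 1 ∂π)
            - (∫ p : E × E, p.2 0 ∂π) * (∫ p : E × E, p.2 1 ∂π))
          = (((∫ p : E × E, p.1 0 * p.1 1 ∂π) - ∫ p : E × E, p.1 0 * p.2 1 ∂π)
              - (∫ p : E × E, p.1 0 ∂π)
                * ((∫ p : E × E, p.1 1 ∂π) - ∫ p : E × E, p.2 1 ∂π))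
            + (((∫ p : E × E, p.1 0 * p.2 1 ∂π) - ∫ p : E × E, p.2 0 * p.2 1 ∂π)
              - ((∫ p : E × E, p.1 0 ∂π) - ∫ p : E × E, p.2 0 ∂π)
                * (∫ p : E × E, p.2 1 ∂π)) := by ring
      rw [hdecomp]
      calc |_ + _| ≤ _ + _ := abs_add_le _ _
        _ ≤ Real.sqrt (∫ p : E × E, (p.1 0) ^ 2 ∂π)
              * Real.sqrt (∫ p : E × E, (p.1 1 - p.2 1) ^ 2 ∂π)
            + Real.sqrt (∫ p : E × E, (p.1 0 - p.2 0) ^ 2 ∂π)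
              * Real.sqrt (∫ p : E × E, (p.2 1) ^ 2 ∂π) := add_le_add hcov1 hcov2
        _ ≤ M2 G * Real.sqrt L.toReal + Real.sqrt L.toReal * M2 H := by
            exact add_le_add (mul_le_mul b1 b2 (Real.sqrt_nonneg _) (M2_nonneg G))
              (mul_le_mul b3 b4 (Real.sqrt_nonneg _) (Real.sqrt_nonneg _))
        _ = (M2 G + M2 H) * Real.sqrt L.toReal := by ring
    calc ENNReal.ofReal |covFun G - covFun H|
        ≤ ENNReal.ofReal ((M2 G + M2 H) * Real.sqrt L.toReal) :=
          ENNReal.ofReal_le_ofReal habs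
      _ = c * ENNReal.ofReal (Real.sqrt L.toReal) :=
          ENNReal.ofReal_mul (by linarith)
      _ = c * L ^ ((1 : ℝ) / 2) := by
          rw [Real.sqrt_eq_rpow, ENNReal.toReal_rpow,
            ENNReal.ofReal_toReal (ENNReal.rpow_ne_top_of_nonneg (by norm_num) hLtop)]
      _ = L ^ ((1 : ℝ) / 2) * c := mul_comm _ _

end Main
end

section
/- Let Z1, ..., Zn be independent real random variables with common distribution function F satisfying ∫_ℝ √(F(z)(1-F(z))) dz < ∞, and w1,...,wn nonnegative constants summing to 1. Then the weighted empirical distribution F_n = Σ w_i δ_{Z_i} satisfies E[W1(F_n, F)] ≤ (Σ_{i=1}^n w_i²)^{1/2} · ∫_ℝ √(F(z)(1-F(z))) dz. -/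
open MeasureTheory ProbabilityTheory
open scoped ENNReal NNReal

lemma key_pointwise
    {Ω : Type*} [MeasurableSpace Ω] (P : MeasureTheory.Measure Ω)
    [IsProbabilityMeasure P]
    {n : ℕ} (Z : Fin n → Ω → ℝ) (hZmeas : ∀ i, Measurable (Z i))
    (hindep : ProbabilityTheory.iIndepFun Z P)
    (μ : MeasureTheory.Measure ℝ) [IsProbabilityMeasure μ]
    (hid : ∀ i, P.map (Z i) = μ)
    (w : Fin n → ℝ) (hw1 : ∑ i, w i = 1) (z : ℝ) :
    (∫⁻ ω, (‖(∑ i, w i * (if Z i ω ≤ z then (1 : ℝ) else 0)) - cdf μ z‖₊ : ℝ≥0∞) ∂P)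
      ≤ ENNReal.ofReal (Real.sqrt (∑ i, (w i) ^ 2)
          * Real.sqrt (cdf μ z * (1 - cdf μ z))) := by
  set p : ℝ := cdf μ z with hp
  set φ : Fin n → ℝ → ℝ := fun i x => w i * ((if x ≤ z then (1 : ℝ) else 0) - p) with hφ
  have hφmeas : ∀ i, Measurable (φ i) := by
    intro i
    exact measurable_const.mul
      ((Measurable.ite measurableSet_Iic measurable_const measurable_const).sub
        measurable_const)
  set Y : Fin n → Ω → ℝ := fun i => φ i ∘ Z i with hY
  have hYmeas : ∀ i, Measurable (Y i) := fun i => (hφmeas i).comp (hZmeas i)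
  have hYbdd : ∀ i ω, ‖Y i ω‖ ≤ |w i| * (1 + |p|) := by
    intro i ω
    simp only [hY, hφ, Function.comp_apply, norm_mul, Real.norm_eq_abs]
    gcongr
    calc |(if Z i ω ≤ z then (1:ℝ) else 0) - p| ≤ |(if Z i ω ≤ z then (1:ℝ) else 0)| + |p| :=
      abs_sub _ _
    _ ≤ 1 + |p| := by split <;> simp
  have hYℒ2 : ∀ i, MemLp (Y i) 2 P := fun i =>
    MemLp.of_bound (hYmeas i).aestronglyMeasurable _ (Filter.Eventually.of_forall (hYbdd i))
  -- mean computations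
  have hInd : ∀ i, ∫ ω, (if Z i ω ≤ z then (1:ℝ) else 0) ∂P = p := by
    intro i
    have : ∫ ω, (if Z i ω ≤ z then (1:ℝ) else 0) ∂P
        = ∫ x, (if x ≤ z then (1:ℝ) else 0) ∂μ := by
      rw [← hid i, integral_map (hZmeas i).aemeasurable]
      exact (Measurable.ite measurableSet_Iic measurable_const measurable_const).aestronglyMeasurable
    rw [this]
    have : (fun x : ℝ => (if x ≤ z then (1:ℝ) else 0))
        = Set.indicator (Set.Iic z) (fun _ => (1:ℝ)) := by
      ext x; simp [Set.indicator_apply]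
    rw [this, integral_indicator_const (1:ℝ) measurableSet_Iic, hp, cdf_eq_real]
    simp
  have hIntInd : ∀ i, Integrable (fun ω => (if Z i ω ≤ z then (1:ℝ) else 0)) P := by
    intro i
    refine Integrable.mono' (integrable_const (1:ℝ))
      (Measurable.aestronglyMeasurable ?_) (Filter.Eventually.of_forall fun ω => ?_)
    · exact Measurable.ite ((hZmeas i) measurableSet_Iic) measurable_const measurable_const
    · split <;> simp
  have hYmean : ∀ i, ∫ ω, Y i ω ∂P = 0 := by
    intro i
    simp only [hY, hφ, Function.comp_apply]
    rw [integral_const_mul, integral_sub (hIntInd i) (integrable_const p), hInd i,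
      integral_const]
    simp
  -- variance computation
  have hsq : ∀ i, ∫ ω, ((if Z i ω ≤ z then (1:ℝ) else 0) - p) ^ 2 ∂P = p - p ^ 2 := by
    intro i
    have hpt : ∀ ω, ((if Z i ω ≤ z then (1:ℝ) else 0) - p) ^ 2
        = (1 - 2 * p) * (if Z i ω ≤ z then (1:ℝ) else 0) + p ^ 2 := by
      intro ω; split <;> ring
    simp_rw [hpt]
    rw [integral_add ((hIntInd i).const_mul _) (integrable_const _), integral_const_mul,
      hInd i, integral_const]
    simp only [measure_univ, ENNReal.toReal_one, smul_eq_mul, one_mul, probReal_univ]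
    ring
  have hYvar : ∀ i, variance (Y i) P = w i ^ 2 * (p - p ^ 2) := by
    intro i
    have : Y i = fun ω => w i * ((if Z i ω ≤ z then (1:ℝ) else 0) - p) := rfl
    rw [this, variance_const_mul]
    congr 1
    have hm : MemLp (fun ω => (if Z i ω ≤ z then (1:ℝ) else 0) - p) 2 P := by
      refine MemLp.of_bound ?_ (1 + |p|) (Filter.Eventually.of_forall fun ω => ?_)
      · exact (Measurable.aestronglyMeasurable
          ((Measurable.ite ((hZmeas i) measurableSet_Iic) measurable_const
            measurable_const).sub measurable_const))
      · calc ‖(if Z i ω ≤ z then (1:ℝ) else 0) - p‖ ≤ ‖(if Z i ω ≤ z then (1:ℝ) else 0)‖ + ‖p‖ :=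
            norm_sub_le _ _
        _ ≤ 1 + |p| := by split <;> simp [Real.norm_eq_abs]
    rw [variance_eq_sub hm]
    have h1 : ∫ ω, ((if Z i ω ≤ z then (1:ℝ) else 0) - p) ∂P = 0 := by
      rw [integral_sub (hIntInd i) (integrable_const p), hInd i, integral_const]
      simp
    simp only [Pi.pow_apply]
    rw [hsq i, h1]
    ring
  -- independence
  have hpair : Set.Pairwise ↑(Finset.univ : Finset (Fin n))
      (fun i j => IndepFun (Y i) (Y j) P) := by
    intro i _ j _ hij
    exact (hindep.indepFun hij).comp (hφmeas i) (hφmeas j)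
  set S : Ω → ℝ := ∑ i, Y i with hS
  have hSℒ2 : MemLp S 2 P := memLp_finset_sum' _ fun i _ => hYℒ2 i
  have hSvar : variance S P = (∑ i, w i ^ 2) * (p - p ^ 2) := by
    rw [hS, IndepFun.variance_sum (fun i _ => hYℒ2 i) hpair]
    simp_rw [hYvar, ← Finset.sum_mul]
  have hSmean : ∫ ω, S ω ∂P = 0 := by
    rw [hS]
    have : ∀ ω, (∑ i, Y i) ω = ∑ i, Y i ω := fun ω => by simp
    simp_rw [this]
    rw [integral_finset_sum _ (fun i _ => (hYℒ2 i).integrable one_le_two)]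
    simp [hYmean]
  -- the main chain
  have hrw : ∀ ω, (∑ i, w i * (if Z i ω ≤ z then (1 : ℝ) else 0)) - p = S ω := by
    intro ω
    simp only [hS, hY, hφ, Finset.sum_apply, Function.comp_apply, mul_sub]
    rw [Finset.sum_sub_distrib, ← Finset.sum_mul, hw1]
    ring
  simp_rw [hrw]
  have h1 : (∫⁻ ω, (‖S ω‖₊ : ℝ≥0∞) ∂P) = eLpNorm S 1 P := (eLpNorm_one_eq_lintegral_enorm (f := S) (μ := P)).symm
  have h2 : eLpNorm S 1 P ≤ eLpNorm S 2 P :=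
    eLpNorm_le_eLpNorm_of_exponent_le one_le_two hSℒ2.aestronglyMeasurable
  have h3 : eLpNorm S 2 P = (evariance S P) ^ (1/2 : ℝ) := by
    rw [eLpNorm_eq_lintegral_rpow_enorm_toReal two_ne_zero ENNReal.ofNat_ne_top, evariance, hSmean]
    simp only [ENNReal.toReal_ofNat, sub_zero]
    congr 1
    exact lintegral_congr fun ω => ENNReal.rpow_two _
  have h4 : evariance S P = ENNReal.ofReal ((∑ i, w i ^ 2) * (p - p ^ 2)) := by
    rw [← hSℒ2.ofReal_variance_eq, hSvar]
  calc (∫⁻ ω, (‖S ω‖₊ : ℝ≥0∞) ∂P) ≤ eLpNorm S 2 P := h1 ▸ h2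
  _ = ENNReal.ofReal (Real.sqrt (∑ i, w i ^ 2) * Real.sqrt (p * (1 - p))) := by
      have hp0 : 0 ≤ p := cdf_nonneg μ z
      have hp1 : p ≤ 1 := cdf_le_one μ z
      have hV0 : (0:ℝ) ≤ (∑ i, w i ^ 2) * (p - p ^ 2) := mul_nonneg (Finset.sum_nonneg (fun i _ => sq_nonneg (w i))) (by nlinarith)
      rw [h3, h4, ENNReal.ofReal_rpow_of_nonneg hV0 (by norm_num)]
      congr 1
      rw [← Real.sqrt_eq_rpow, show (∑ i, w i ^ 2) * (p - p ^ 2) = (∑ i, w i ^ 2) * (p * (1 - p)) by ring,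
        Real.sqrt_mul (Finset.sum_nonneg (fun i _ => sq_nonneg (w i)))]

/-- For independent random variables `Z₁,…,Zₙ` with common cdf `F` satisfying
`∫ √(F(1-F)) < ∞` and probability weights `wᵢ`, the weighted empirical distribution
`F_n(z) = Σ wᵢ 1_{Zᵢ ≤ z}` satisfies
`E[W₁(F_n, F)] = E ∫ |F_n(z) - F(z)| dz ≤ (Σ wᵢ²)^{1/2} ∫ √(F(z)(1-F(z))) dz`. -/
theorem expected_W1_weighted_empirical_le
    {Ω : Type*} [MeasurableSpace Ω] (P : MeasureTheory.Measure Ω)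
    [IsProbabilityMeasure P]
    {n : ℕ} (Z : Fin n → Ω → ℝ) (hZmeas : ∀ i, Measurable (Z i))
    (hindep : ProbabilityTheory.iIndepFun Z P)
    (μ : MeasureTheory.Measure ℝ) [IsProbabilityMeasure μ]
    (hid : ∀ i, P.map (Z i) = μ)
    (hJ : MeasureTheory.Integrable (fun z => Real.sqrt (cdf μ z * (1 - cdf μ z))))
    (w : Fin n → ℝ) (hw0 : ∀ i, 0 ≤ w i) (hw1 : ∑ i, w i = 1) :
    (∫⁻ ω, (∫⁻ z,
        (‖(∑ i, w i * (if Z i ω ≤ z then (1 : ℝ) else 0)) - cdf μ z‖₊ : ℝ≥0∞)) ∂P)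
      ≤ ENNReal.ofReal (Real.sqrt (∑ i, (w i) ^ 2)
          * ∫ z, Real.sqrt (cdf μ z * (1 - cdf μ z))) := by
  have hmeas : Measurable (fun q : Ω × ℝ =>
      ((‖(∑ i, w i * (if Z i q.1 ≤ q.2 then (1 : ℝ) else 0)) - cdf μ q.2‖₊ : ℝ≥0∞))) := by
    apply Measurable.coe_nnreal_ennreal
    apply Measurable.nnnorm
    refine Measurable.sub ?_ ((cdf μ).mono.measurable.comp measurable_snd)
    refine Finset.measurable_sum _ fun i _ => measurable_const.mul ?_
    exact Measurable.ite (measurableSet_le ((hZmeas i).comp measurable_fst) measurable_snd)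
      measurable_const measurable_const
  rw [lintegral_lintegral_swap hmeas.aemeasurable]
  calc (∫⁻ z, ∫⁻ ω,
      (‖(∑ i, w i * (if Z i ω ≤ z then (1 : ℝ) else 0)) - cdf μ z‖₊ : ℝ≥0∞) ∂P)
      ≤ ∫⁻ z, ENNReal.ofReal (Real.sqrt (∑ i, (w i) ^ 2)
          * Real.sqrt (cdf μ z * (1 - cdf μ z))) := by
        exact lintegral_mono fun z => key_pointwise P Z hZmeas hindep μ hid w hw1 z
  _ = ENNReal.ofReal (Real.sqrt (∑ i, (w i) ^ 2)
          * ∫ z, Real.sqrt (cdf μ z * (1 - cdf μ z))) := by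
      rw [← integral_const_mul]
      rw [ofReal_integral_eq_lintegral_ofReal (hJ.const_mul _)
        (Filter.Eventually.of_forall fun z => by positivity)]
end

section
/- Let μ, ν be probability measures on ℝ^d with finite p-th moments, and for u, v ∈ S^{d-1} let μ∘u∗⁻¹ denote the pushforward of μ by x ↦ u·x. Then |W_p(μ∘u∗⁻¹, ν∘u∗⁻¹) - W_p(μ∘v∗⁻¹, ν∘v∗⁻¹)| ≤ (M_p(μ) + M_p(ν)) ‖u - v‖, i.e. the projected Wasserstein distance is Lipschitz in the direction. -/
open MeasureTheory
open scoped ENNReal NNReal RealInnerProductSpace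

/-- The Wasserstein distance of order `p` on ℝ. -/
noncomputable def Wp (p : ℝ) (μ ν : MeasureTheory.Measure ℝ) : ℝ≥0∞ :=
  ⨅ (π : MeasureTheory.Measure (ℝ × ℝ))
    (_ : π.map Prod.fst = μ ∧ π.map Prod.snd = ν),
    (∫⁻ x, (‖x.1 - x.2‖₊ : ℝ≥0∞) ^ p ∂π) ^ (1 / p)

/-- `p`-th moment norm (in `ℝ≥0∞`). -/
noncomputable def Mp (p : ℝ) {d : ℕ}
    (μ : MeasureTheory.Measure (EuclideanSpace ℝ (Fin d))) : ℝ≥0∞ :=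
  (∫⁻ y, (‖y‖₊ : ℝ≥0∞) ^ p ∂μ) ^ (1 / p)

open ProbabilityTheory

section aux


variable {d : ℕ}

local notation "E" => EuclideanSpace ℝ (Fin d)

lemma meas_inner (u : E) : Measurable fun x : E => ⟪u, x⟫ :=
  (continuous_const.inner continuous_id).measurable

lemma Wp_one_sided (p : ℝ) (hp : 1 ≤ p)
    (μ ν : Measure E) [IsProbabilityMeasure μ] [IsProbabilityMeasure ν] (u v : E) :
    Wp p (μ.map (fun x => ⟪u, x⟫)) (ν.map (fun x => ⟪u, x⟫))
        ≤ Wp p (μ.map (fun x => ⟪v, x⟫)) (ν.map (fun x => ⟪v, x⟫))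
          + (Mp p μ + Mp p ν) * ENNReal.ofReal ‖u - v‖ := by
  have hp0 : 0 < p := lt_of_lt_of_le one_pos hp
  have hfu : Measurable fun x : E => ⟪u, x⟫ := meas_inner u
  have hfv : Measurable fun x : E => ⟪v, x⟫ := meas_inner v
  have hfvu : Measurable fun x : E => ((⟪v, x⟫ : ℝ), (⟪u, x⟫ : ℝ)) := hfv.prodMk hfu
  set c : ℝ≥0∞ := (‖u - v‖₊ : ℝ≥0∞) with hc
  have hcC : ENNReal.ofReal ‖u - v‖ = c := by rw [hc]; exact ofReal_norm (u - v)
  rw [hcC]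
  -- reduce to the per-coupling statement
  suffices h : ∀ π : Measure (ℝ × ℝ),
      (π.map Prod.fst = μ.map (fun x => ⟪v, x⟫) ∧ π.map Prod.snd = ν.map (fun x => ⟪v, x⟫)) →
      Wp p (μ.map (fun x => ⟪u, x⟫)) (ν.map (fun x => ⟪u, x⟫))
        ≤ (∫⁻ x, (‖x.1 - x.2‖₊ : ℝ≥0∞) ^ p ∂π) ^ (1 / p) + (Mp p μ + Mp p ν) * c by
    have := le_iInf₂ h
    refine this.trans_eq ?_
    rw [Wp]
    simp only [← ENNReal.iInf_add]
  intro π hπ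
  obtain ⟨h1, h2⟩ := hπ
  haveI : IsProbabilityMeasure (μ.map (fun x => ⟪v, x⟫)) :=
    Measure.isProbabilityMeasure_map hfv.aemeasurable
  haveI : IsProbabilityMeasure (ν.map (fun x => ⟪v, x⟫)) :=
    Measure.isProbabilityMeasure_map hfv.aemeasurable
  haveI : IsProbabilityMeasure π := by
    constructor
    have : (π.map Prod.fst) Set.univ = 1 := by rw [h1]; exact measure_univ
    rwa [Measure.map_apply measurable_fst MeasurableSet.univ, Set.preimage_univ] at this
  set A : Measure (ℝ × ℝ) := μ.map (fun x => ((⟪v, x⟫ : ℝ), (⟪u, x⟫ : ℝ))) with hAdef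
  set B : Measure (ℝ × ℝ) := ν.map (fun x => ((⟪v, x⟫ : ℝ), (⟪u, x⟫ : ℝ))) with hBdef
  haveI : IsProbabilityMeasure A := Measure.isProbabilityMeasure_map hfvu.aemeasurable
  haveI : IsProbabilityMeasure B := Measure.isProbabilityMeasure_map hfvu.aemeasurable
  set K := A.condKernel with hK
  set L := B.condKernel with hL
  have hA : A.fst ⊗ₘ K = A := by rw [hK]; exact Measure.disintegrate _ _
  have hB : B.fst ⊗ₘ L = B := by rw [hL]; exact Measure.disintegrate _ _
  have hAfst : A.fst = μ.map (fun x => ⟪v, x⟫) := by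
    rw [hAdef, Measure.fst, Measure.map_map measurable_fst hfvu]; rfl
  have hBfst : B.fst = ν.map (fun x => ⟪v, x⟫) := by
    rw [hBdef, Measure.fst, Measure.map_map measurable_fst hfvu]; rfl
  set M : Kernel (ℝ × ℝ) (ℝ × ℝ) := (Kernel.prodMkRight ℝ K) ×ₖ (Kernel.prodMkLeft ℝ L) with hM
  have hMapp : ∀ st : ℝ × ℝ, M st = (K st.1).prod (L st.2) := by
    intro st
    rw [hM, Kernel.prod_apply, Kernel.prodMkRight_apply, Kernel.prodMkLeft_apply]
  set ρ : Measure ((ℝ × ℝ) × (ℝ × ℝ)) := π ⊗ₘ M with hρ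
  set π' : Measure (ℝ × ℝ) := ρ.map Prod.snd with hπ'
  -- first marginal
  have hm1 : π'.map Prod.fst = μ.map (fun x => ⟪u, x⟫) := by
    rw [hπ', Measure.map_map measurable_fst measurable_snd]
    ext S hS
    rw [Measure.map_apply (measurable_fst.comp measurable_snd) hS,
      Measure.compProd_apply ((measurable_fst.comp measurable_snd) hS)]
    have e1 : ∀ st : ℝ × ℝ,
        M st (Prod.mk st ⁻¹' ((Prod.fst ∘ Prod.snd) ⁻¹' S)) = K st.1 S := by
      intro st
      have : Prod.mk st ⁻¹' ((Prod.fst ∘ Prod.snd) ⁻¹' S) = S ×ˢ (Set.univ : Set ℝ) := by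
        ext ab; simp [Set.mem_prod]
      rw [this, hMapp st, Measure.prod_prod, measure_univ, mul_one]
    simp only [e1]
    rw [← lintegral_map (Kernel.measurable_coe K hS) measurable_fst, h1, ← hAfst]
    have : ∫⁻ s, K s S ∂A.fst = (A.fst ⊗ₘ K) (Prod.snd ⁻¹' S) := by
      rw [Measure.compProd_apply (measurable_snd hS)]
      exact lintegral_congr fun a => by congr 1
    rw [this, hA, hAdef, Measure.map_apply hfvu (measurable_snd hS),
      Measure.map_apply hfu hS]
    rfl
  -- second marginal
  have hm2 : π'.map Prod.snd = ν.map (fun x => ⟪u, x⟫) := by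
    rw [hπ', Measure.map_map measurable_snd measurable_snd]
    ext S hS
    rw [Measure.map_apply (measurable_snd.comp measurable_snd) hS,
      Measure.compProd_apply ((measurable_snd.comp measurable_snd) hS)]
    have e1 : ∀ st : ℝ × ℝ,
        M st (Prod.mk st ⁻¹' ((Prod.snd ∘ Prod.snd) ⁻¹' S)) = L st.2 S := by
      intro st
      have : Prod.mk st ⁻¹' ((Prod.snd ∘ Prod.snd) ⁻¹' S) = (Set.univ : Set ℝ) ×ˢ S := by
        ext ab; simp [Set.mem_prod]
      rw [this, hMapp st, Measure.prod_prod, measure_univ, one_mul]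
    simp only [e1]
    rw [← lintegral_map (Kernel.measurable_coe L hS) measurable_snd, h2, ← hBfst]
    have : ∫⁻ t, L t S ∂B.fst = (B.fst ⊗ₘ L) (Prod.snd ⁻¹' S) := by
      rw [Measure.compProd_apply (measurable_snd hS)]
      exact lintegral_congr fun a => by congr 1
    rw [this, hB, hBdef, Measure.map_apply hfvu (measurable_snd hS),
      Measure.map_apply hfu hS]
    rfl
  -- Markov kernel instances
  haveI hKM : IsMarkovKernel K := by rw [hK]; infer_instance
  haveI hLM : IsMarkovKernel L := by rw [hL]; infer_instance
  haveI hMM : IsMarkovKernel M := by rw [hM]; infer_instance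
  have hq0 : (0:ℝ) ≤ 1 / p := one_div_nonneg.mpr hp0.le
  -- reduce to cost of π'
  have hWle : Wp p (μ.map (fun x => ⟪u, x⟫)) (ν.map (fun x => ⟪u, x⟫))
      ≤ (∫⁻ x, (‖x.1 - x.2‖₊ : ℝ≥0∞) ^ p ∂π') ^ (1 / p) := by
    rw [Wp]
    exact iInf₂_le π' ⟨hm1, hm2⟩
  have hcost : ∫⁻ x, (‖x.1 - x.2‖₊ : ℝ≥0∞) ^ p ∂π'
      = ∫⁻ q, (‖q.2.1 - q.2.2‖₊ : ℝ≥0∞) ^ p ∂ρ := by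
    rw [hπ', lintegral_map (f := fun x : ℝ × ℝ => (‖x.1 - x.2‖₊ : ℝ≥0∞) ^ p)
      (((measurable_fst.sub measurable_snd).nnnorm.coe_nnreal_ennreal).pow_const p)
      measurable_snd]
  -- measurable pieces
  have m1 : Measurable fun q : (ℝ × ℝ) × (ℝ × ℝ) => (‖q.2.1 - q.1.1‖₊ : ℝ≥0∞) :=
    ((measurable_snd.fst.sub measurable_fst.fst).nnnorm).coe_nnreal_ennreal
  have m2 : Measurable fun q : (ℝ × ℝ) × (ℝ × ℝ) => (‖q.1.1 - q.1.2‖₊ : ℝ≥0∞) :=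
    ((measurable_fst.fst.sub measurable_fst.snd).nnnorm).coe_nnreal_ennreal
  have m3 : Measurable fun q : (ℝ × ℝ) × (ℝ × ℝ) => (‖q.1.2 - q.2.2‖₊ : ℝ≥0∞) :=
    ((measurable_fst.snd.sub measurable_snd.snd).nnnorm).coe_nnreal_ennreal
  -- pointwise triangle inequality
  have hptw : ∀ q : (ℝ × ℝ) × (ℝ × ℝ), (‖q.2.1 - q.2.2‖₊ : ℝ≥0∞)
      ≤ (‖q.2.1 - q.1.1‖₊ : ℝ≥0∞) + ((‖q.1.1 - q.1.2‖₊ : ℝ≥0∞) + (‖q.1.2 - q.2.2‖₊ : ℝ≥0∞)) := by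
    intro q
    have h0 : ‖q.2.1 - q.2.2‖₊ ≤ ‖q.2.1 - q.1.1‖₊ + (‖q.1.1 - q.1.2‖₊ + ‖q.1.2 - q.2.2‖₊) := by
      have e : q.2.1 - q.2.2 = (q.2.1 - q.1.1) + ((q.1.1 - q.1.2) + (q.1.2 - q.2.2)) := by ring
      rw [e]
      exact (nnnorm_add_le _ _).trans (add_le_add le_rfl (nnnorm_add_le _ _))
    exact_mod_cast h0
  have step1 : (∫⁻ q, (‖q.2.1 - q.2.2‖₊ : ℝ≥0∞) ^ p ∂ρ) ^ (1 / p)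
      ≤ (∫⁻ q : (ℝ × ℝ) × (ℝ × ℝ), ((‖q.2.1 - q.1.1‖₊ : ℝ≥0∞)
          + ((‖q.1.1 - q.1.2‖₊ : ℝ≥0∞) + (‖q.1.2 - q.2.2‖₊ : ℝ≥0∞))) ^ p ∂ρ) ^ (1 / p) :=
    ENNReal.rpow_le_rpow
      (lintegral_mono fun q => ENNReal.rpow_le_rpow (hptw q) hp0.le) hq0
  have mink : (∫⁻ q : (ℝ × ℝ) × (ℝ × ℝ), ((‖q.2.1 - q.1.1‖₊ : ℝ≥0∞)
          + ((‖q.1.1 - q.1.2‖₊ : ℝ≥0∞) + (‖q.1.2 - q.2.2‖₊ : ℝ≥0∞))) ^ p ∂ρ) ^ (1 / p)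
      ≤ (∫⁻ q, (‖q.2.1 - q.1.1‖₊ : ℝ≥0∞) ^ p ∂ρ) ^ (1 / p)
        + ((∫⁻ q, (‖q.1.1 - q.1.2‖₊ : ℝ≥0∞) ^ p ∂ρ) ^ (1 / p)
          + (∫⁻ q, (‖q.1.2 - q.2.2‖₊ : ℝ≥0∞) ^ p ∂ρ) ^ (1 / p)) :=
    (ENNReal.lintegral_Lp_add_le m1.aemeasurable (m2.add m3).aemeasurable hp).trans
      (add_le_add le_rfl (ENNReal.lintegral_Lp_add_le m2.aemeasurable m3.aemeasurable hp))
  -- J2 : middle term is the cost of π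
  have hJ2 : ∫⁻ q, (‖q.1.1 - q.1.2‖₊ : ℝ≥0∞) ^ p ∂ρ
      = ∫⁻ st : ℝ × ℝ, (‖st.1 - st.2‖₊ : ℝ≥0∞) ^ p ∂π := by
    rw [hρ, Measure.lintegral_compProd (m2.pow_const p)]
    refine lintegral_congr fun st => ?_
    exact (lintegral_const ((‖st.1 - st.2‖₊ : ℝ≥0∞) ^ p)).trans
      (by rw [measure_univ, mul_one])
  -- J1
  have fmeasA : Measurable fun sa : ℝ × ℝ => (‖sa.2 - sa.1‖₊ : ℝ≥0∞) ^ p :=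
    ((measurable_snd.sub measurable_fst).nnnorm.coe_nnreal_ennreal).pow_const p
  have hJ1 : ∫⁻ q, (‖q.2.1 - q.1.1‖₊ : ℝ≥0∞) ^ p ∂ρ
      ≤ c ^ p * ∫⁻ y, (‖y‖₊ : ℝ≥0∞) ^ p ∂μ := by
    have hmeash : Measurable fun s : ℝ => ∫⁻ a, (‖a - s‖₊ : ℝ≥0∞) ^ p ∂(K s) :=
      Measurable.lintegral_kernel_prod_right' (κ := K) fmeasA
    calc ∫⁻ q, (‖q.2.1 - q.1.1‖₊ : ℝ≥0∞) ^ p ∂ρ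
        = ∫⁻ st : ℝ × ℝ, ∫⁻ a, (‖a - st.1‖₊ : ℝ≥0∞) ^ p ∂(K st.1) ∂π := by
          rw [hρ, Measure.lintegral_compProd (m1.pow_const p)]
          refine lintegral_congr fun st => ?_
          rw [hMapp st]
          have hfm : Measurable fun ab : ℝ × ℝ => (‖ab.1 - st.1‖₊ : ℝ≥0∞) ^ p :=
            ((measurable_fst.sub measurable_const).nnnorm.coe_nnreal_ennreal).pow_const p
          have h2' : ∫⁻ ab : ℝ × ℝ, (‖ab.1 - st.1‖₊ : ℝ≥0∞) ^ p ∂((K st.1).prod (L st.2))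
              = ∫⁻ a, (‖a - st.1‖₊ : ℝ≥0∞) ^ p ∂(K st.1) := by
            rw [lintegral_prod _ hfm.aemeasurable]
            refine lintegral_congr fun a => ?_
            exact (lintegral_const ((‖a - st.1‖₊ : ℝ≥0∞) ^ p)).trans
              (by rw [measure_univ, mul_one])
          exact h2'
      _ = ∫⁻ s, ∫⁻ a, (‖a - s‖₊ : ℝ≥0∞) ^ p ∂(K s) ∂(π.map Prod.fst) :=
          (lintegral_map hmeash measurable_fst).symm
      _ = ∫⁻ s, ∫⁻ a, (‖a - s‖₊ : ℝ≥0∞) ^ p ∂(K s) ∂A.fst := by rw [h1, hAfst]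
      _ = ∫⁻ sa : ℝ × ℝ, (‖sa.2 - sa.1‖₊ : ℝ≥0∞) ^ p ∂(A.fst ⊗ₘ K) :=
          (Measure.lintegral_compProd fmeasA).symm
      _ = ∫⁻ sa : ℝ × ℝ, (‖sa.2 - sa.1‖₊ : ℝ≥0∞) ^ p ∂A := by rw [hA]
      _ = ∫⁻ x, (‖(⟪u, x⟫ : ℝ) - (⟪v, x⟫ : ℝ)‖₊ : ℝ≥0∞) ^ p ∂μ := by
          rw [hAdef, lintegral_map fmeasA hfvu]
      _ ≤ ∫⁻ x, (c * (‖x‖₊ : ℝ≥0∞)) ^ p ∂μ := by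
          refine lintegral_mono fun x => ENNReal.rpow_le_rpow ?_ hp0.le
          have e : (⟪u, x⟫ : ℝ) - (⟪v, x⟫ : ℝ) = ⟪u - v, x⟫ := (inner_sub_left _ _ _).symm
          rw [e, hc, ← ENNReal.coe_mul]
          exact_mod_cast nnnorm_inner_le_nnnorm (𝕜 := ℝ) (u - v) x
      _ = c ^ p * ∫⁻ y, (‖y‖₊ : ℝ≥0∞) ^ p ∂μ := by
          simp_rw [ENNReal.mul_rpow_of_nonneg _ _ hp0.le]
          rw [lintegral_const_mul _ (measurable_nnnorm.coe_nnreal_ennreal.pow_const p)]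
  -- J3
  have fmeasB : Measurable fun tb : ℝ × ℝ => (‖tb.1 - tb.2‖₊ : ℝ≥0∞) ^ p :=
    ((measurable_fst.sub measurable_snd).nnnorm.coe_nnreal_ennreal).pow_const p
  have hJ3 : ∫⁻ q, (‖q.1.2 - q.2.2‖₊ : ℝ≥0∞) ^ p ∂ρ
      ≤ c ^ p * ∫⁻ y, (‖y‖₊ : ℝ≥0∞) ^ p ∂ν := by
    have hmeash : Measurable fun t : ℝ => ∫⁻ b, (‖t - b‖₊ : ℝ≥0∞) ^ p ∂(L t) :=
      Measurable.lintegral_kernel_prod_right' (κ := L) fmeasB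
    calc ∫⁻ q, (‖q.1.2 - q.2.2‖₊ : ℝ≥0∞) ^ p ∂ρ
        = ∫⁻ st : ℝ × ℝ, ∫⁻ b, (‖st.2 - b‖₊ : ℝ≥0∞) ^ p ∂(L st.2) ∂π := by
          rw [hρ, Measure.lintegral_compProd (m3.pow_const p)]
          refine lintegral_congr fun st => ?_
          rw [hMapp st]
          have hfm : Measurable fun ab : ℝ × ℝ => (‖st.2 - ab.2‖₊ : ℝ≥0∞) ^ p :=
            ((measurable_const.sub measurable_snd).nnnorm.coe_nnreal_ennreal).pow_const p
          have h2' : ∫⁻ ab : ℝ × ℝ, (‖st.2 - ab.2‖₊ : ℝ≥0∞) ^ p ∂((K st.1).prod (L st.2))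
              = ∫⁻ b, (‖st.2 - b‖₊ : ℝ≥0∞) ^ p ∂(L st.2) := by
            rw [lintegral_prod _ hfm.aemeasurable]
            calc ∫⁻ a, ∫⁻ b, (‖st.2 - (a, b).2‖₊ : ℝ≥0∞) ^ p ∂(L st.2) ∂(K st.1)
                = ∫⁻ _a : ℝ, (∫⁻ b, (‖st.2 - b‖₊ : ℝ≥0∞) ^ p ∂(L st.2)) ∂(K st.1) :=
                  lintegral_congr fun a => rfl
              _ = _ := (lintegral_const _).trans (by rw [measure_univ, mul_one])
          exact h2'
      _ = ∫⁻ t, ∫⁻ b, (‖t - b‖₊ : ℝ≥0∞) ^ p ∂(L t) ∂(π.map Prod.snd) :=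
          (lintegral_map hmeash measurable_snd).symm
      _ = ∫⁻ t, ∫⁻ b, (‖t - b‖₊ : ℝ≥0∞) ^ p ∂(L t) ∂B.fst := by rw [h2, hBfst]
      _ = ∫⁻ tb : ℝ × ℝ, (‖tb.1 - tb.2‖₊ : ℝ≥0∞) ^ p ∂(B.fst ⊗ₘ L) :=
          (Measure.lintegral_compProd fmeasB).symm
      _ = ∫⁻ tb : ℝ × ℝ, (‖tb.1 - tb.2‖₊ : ℝ≥0∞) ^ p ∂B := by rw [hB]
      _ = ∫⁻ x, (‖(⟪v, x⟫ : ℝ) - (⟪u, x⟫ : ℝ)‖₊ : ℝ≥0∞) ^ p ∂ν := by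
          rw [hBdef, lintegral_map fmeasB hfvu]
      _ ≤ ∫⁻ x, (c * (‖x‖₊ : ℝ≥0∞)) ^ p ∂ν := by
          refine lintegral_mono fun x => ENNReal.rpow_le_rpow ?_ hp0.le
          have e : (⟪v, x⟫ : ℝ) - (⟪u, x⟫ : ℝ) = ⟪v - u, x⟫ := (inner_sub_left _ _ _).symm
          rw [e, hc, ← nnnorm_neg (u - v), neg_sub, ← ENNReal.coe_mul]
          exact_mod_cast nnnorm_inner_le_nnnorm (𝕜 := ℝ) (v - u) x
      _ = c ^ p * ∫⁻ y, (‖y‖₊ : ℝ≥0∞) ^ p ∂ν := by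
          simp_rw [ENNReal.mul_rpow_of_nonneg _ _ hp0.le]
          rw [lintegral_const_mul _ (measurable_nnnorm.coe_nnreal_ennreal.pow_const p)]
  -- put things together
  have hcp : ∀ I : ℝ≥0∞, (c ^ p * I) ^ (1 / p) = c * I ^ (1 / p) := by
    intro I
    rw [ENNReal.mul_rpow_of_nonneg _ _ hq0, ← ENNReal.rpow_mul,
      mul_one_div_cancel hp0.ne', ENNReal.rpow_one]
  calc Wp p (μ.map (fun x => ⟪u, x⟫)) (ν.map (fun x => ⟪u, x⟫))
      ≤ (∫⁻ x, (‖x.1 - x.2‖₊ : ℝ≥0∞) ^ p ∂π') ^ (1 / p) := hWle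
    _ = (∫⁻ q, (‖q.2.1 - q.2.2‖₊ : ℝ≥0∞) ^ p ∂ρ) ^ (1 / p) := by rw [hcost]
    _ ≤ (∫⁻ q, (‖q.2.1 - q.1.1‖₊ : ℝ≥0∞) ^ p ∂ρ) ^ (1 / p)
        + ((∫⁻ q, (‖q.1.1 - q.1.2‖₊ : ℝ≥0∞) ^ p ∂ρ) ^ (1 / p)
          + (∫⁻ q, (‖q.1.2 - q.2.2‖₊ : ℝ≥0∞) ^ p ∂ρ) ^ (1 / p)) := step1.trans mink
    _ ≤ c * Mp p μ + ((∫⁻ st : ℝ × ℝ, (‖st.1 - st.2‖₊ : ℝ≥0∞) ^ p ∂π) ^ (1 / p)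
          + c * Mp p ν) := by
        refine add_le_add ?_ (add_le_add (le_of_eq (by rw [hJ2])) ?_)
        · exact (ENNReal.rpow_le_rpow hJ1 hq0).trans (le_of_eq (hcp _))
        · exact (ENNReal.rpow_le_rpow hJ3 hq0).trans (le_of_eq (hcp _))
    _ = (∫⁻ st : ℝ × ℝ, (‖st.1 - st.2‖₊ : ℝ≥0∞) ^ p ∂π) ^ (1 / p)
        + (Mp p μ + Mp p ν) * c := by rw [Mp, Mp]; ring

end aux

/-- The Wasserstein distance between one-dimensional projections is Lipschitz in the
direction: `|W_p(μ∘u⁻¹, ν∘u⁻¹) - W_p(μ∘v⁻¹, ν∘v⁻¹)| ≤ (M_p(μ) + M_p(ν))‖u - v‖`,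
stated as the two-sided inequality. -/
theorem projected_wasserstein_lipschitz_in_direction
    (p : ℝ) (hp : 1 ≤ p) {d : ℕ}
    (μ ν : MeasureTheory.Measure (EuclideanSpace ℝ (Fin d)))
    [IsProbabilityMeasure μ] [IsProbabilityMeasure ν]
    (hμ : (∫⁻ y, (‖y‖₊ : ℝ≥0∞) ^ p ∂μ) < ⊤)
    (hν : (∫⁻ y, (‖y‖₊ : ℝ≥0∞) ^ p ∂ν) < ⊤)
    (u v : EuclideanSpace ℝ (Fin d)) (hu : ‖u‖ = 1) (hv : ‖v‖ = 1) :
    Wp p (μ.map (fun x => ⟪u, x⟫)) (ν.map (fun x => ⟪u, x⟫))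
        ≤ Wp p (μ.map (fun x => ⟪v, x⟫)) (ν.map (fun x => ⟪v, x⟫))
          + (Mp p μ + Mp p ν) * ENNReal.ofReal ‖u - v‖
    ∧ Wp p (μ.map (fun x => ⟪v, x⟫)) (ν.map (fun x => ⟪v, x⟫))
        ≤ Wp p (μ.map (fun x => ⟪u, x⟫)) (ν.map (fun x => ⟪u, x⟫))
          + (Mp p μ + Mp p ν) * ENNReal.ofReal ‖u - v‖ := by
  constructor
  · exact Wp_one_sided p hp μ ν u v
  · have h := Wp_one_sided p hp μ ν v u
    rwa [norm_sub_rev] at h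
end
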